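/- Let X be a Polish space, Y ⊆ ℝ^n analytic, and f : X × Y → ℝ upper semi-analytic (in the sense that {(x,y) ∈ X × Y : f(x,y) > γ} is analytic in X × ℝ^n for every γ). If there exist b : X → ℝ^n and c : X → ℝ with f(x,y) ≤ b(x)·y + c(x) for all x ∈ X, y ∈ Y, then there exist Borel measurable B : X → ℝ^n and C : X → ℝ with f(x,y) ≤ B(x)·y + C(x) for all x ∈ X, y ∈ Y. -/

import Mathlib

open MeasureTheory Set Filter Topology PiNat Function

namespace HypSel

variable {n : ℕ}

/-- dot product of two vectors in `Fin n → ℝ` -/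
def dot (y B : Fin n → ℝ) : ℝ := ∑ i, y i * B i

lemma continuous_dot : Continuous (fun p : (Fin n → ℝ) × (Fin n → ℝ) => dot p.1 p.2) := by
  unfold dot
  exact continuous_finset_sum _ fun i _ =>
    ((continuous_apply i).comp continuous_fst).mul ((continuous_apply i).comp continuous_snd)

lemma continuous_dot_right (y : Fin n → ℝ) : Continuous (fun B => dot y B) := by
  have : (fun B => dot y B) = (fun p : (Fin n → ℝ) × (Fin n → ℝ) => dot p.1 p.2) ∘ (fun B => (y, B)) := rfl
  rw [this]
  exact continuous_dot.comp (continuous_const.prodMk continuous_id)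

lemma dot_convex_comb (y B₁ B₂ : Fin n → ℝ) (a b : ℝ) :
    dot y (a • B₁ + b • B₂) = a * dot y B₁ + b * dot y B₂ := by
  unfold dot
  rw [Finset.mul_sum, Finset.mul_sum, ← Finset.sum_add_distrib]
  exact Finset.sum_congr rfl fun i _ => by
    simp only [Pi.add_apply, Pi.smul_apply, smul_eq_mul]; ring

/-- a "constraint set": a box plus a family of lower bounds on linear functionals. -/
def cSet (lo hi : Fin n → ℝ) {ι : Sort*} (yy : ι → Fin n → ℝ) (t : ι → ℝ) : Set (Fin n → ℝ) :=
  {B | (∀ l, B l ∈ Icc (lo l) (hi l)) ∧ ∀ i, t i ≤ dot (yy i) B}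

variable {lo hi : Fin n → ℝ} {ι : Sort*} {yy : ι → Fin n → ℝ} {t : ι → ℝ}

lemma convex_cSet : Convex ℝ (cSet lo hi yy t) := by
  intro B₁ h₁ B₂ h₂ a b ha hb hab
  have key : ∀ u v : ℝ, u ≤ v → u ≤ a * v + b * v := by
    intro u v huv
    calc u = a * u + b * u := by rw [← add_mul, hab, one_mul]
    _ ≤ a * v + b * v := add_le_add (mul_le_mul_of_nonneg_left huv ha)
        (mul_le_mul_of_nonneg_left huv hb)
  constructor
  · intro l
    have e : (a • B₁ + b • B₂) l = a * B₁ l + b * B₂ l := by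
      simp [Pi.add_apply, Pi.smul_apply, smul_eq_mul]
    constructor
    · rw [e]
      have h1 : a * lo l + b * lo l ≤ a * B₁ l + b * B₂ l :=
        add_le_add (mul_le_mul_of_nonneg_left (h₁.1 l).1 ha)
          (mul_le_mul_of_nonneg_left (h₂.1 l).1 hb)
      calc lo l = a * lo l + b * lo l := by rw [← add_mul, hab, one_mul]
        _ ≤ a * B₁ l + b * B₂ l := h1
    · rw [e]
      have h1 : a * B₁ l + b * B₂ l ≤ a * hi l + b * hi l :=
        add_le_add (mul_le_mul_of_nonneg_left (h₁.1 l).2 ha)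
          (mul_le_mul_of_nonneg_left (h₂.1 l).2 hb)
      calc a * B₁ l + b * B₂ l ≤ a * hi l + b * hi l := h1
        _ = hi l := by rw [← add_mul, hab, one_mul]
  · intro i
    rw [dot_convex_comb]
    have h1 : a * t i + b * t i ≤ a * dot (yy i) B₁ + b * dot (yy i) B₂ :=
      add_le_add (mul_le_mul_of_nonneg_left (h₁.2 i) ha)
        (mul_le_mul_of_nonneg_left (h₂.2 i) hb)
    calc t i = a * t i + b * t i := by rw [← add_mul, hab, one_mul]
      _ ≤ a * dot (yy i) B₁ + b * dot (yy i) B₂ := h1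

lemma box_eq : {B : Fin n → ℝ | ∀ l, B l ∈ Icc (lo l) (hi l)} = Icc lo hi := by
  ext B
  simp [Set.mem_Icc, Pi.le_def, forall_and]

lemma isClosed_cSet : IsClosed (cSet lo hi yy t) := by
  have : cSet lo hi yy t =
      {B : Fin n → ℝ | ∀ l, B l ∈ Icc (lo l) (hi l)} ∩ ⋂ i, {B | t i ≤ dot (yy i) B} := by
    ext B; simp [cSet, mem_iInter]
  rw [this]
  apply IsClosed.inter
  · rw [box_eq]; exact isClosed_Icc
  · exact isClosed_iInter fun i => isClosed_le continuous_const (continuous_dot_right _)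

lemma isCompact_cSet : IsCompact (cSet lo hi yy t) := by
  apply IsCompact.of_isClosed_subset (isCompact_Icc (a := lo) (b := hi)) isClosed_cSet
  intro B hB
  rw [← box_eq (lo := lo) (hi := hi)]
  exact hB.1



/-- The set of parameters `(lo, hi, yy, t)` for which the constraint set is nonempty. -/
def NE (n N : ℕ) : Set ((Fin n → ℝ) × (Fin n → ℝ) × (Fin N → Fin n → ℝ) × (Fin N → ℝ)) :=
  {z | (cSet z.1 z.2.1 z.2.2.1 z.2.2.2).Nonempty}

lemma isClosed_NE (N : ℕ) : IsClosed (NE n N) := by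
  apply IsSeqClosed.isClosed
  intro z z₀ hz hlim
  -- components of the limit
  have hlo : Tendsto (fun k => (z k).1) atTop (nhds z₀.1) := (continuous_fst.tendsto z₀).comp hlim
  have hhi : Tendsto (fun k => (z k).2.1) atTop (nhds z₀.2.1) :=
    ((continuous_fst.comp continuous_snd).tendsto z₀).comp hlim
  have hyy : Tendsto (fun k => (z k).2.2.1) atTop (nhds z₀.2.2.1) :=
    ((continuous_fst.comp (continuous_snd.comp continuous_snd)).tendsto z₀).comp hlim
  have ht : Tendsto (fun k => (z k).2.2.2) atTop (nhds z₀.2.2.2) :=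
    ((continuous_snd.comp (continuous_snd.comp continuous_snd)).tendsto z₀).comp hlim
  -- witnesses
  choose B hBbox hBdot using hz
  -- eventually the witnesses are in a fixed compact box
  have hev : ∀ᶠ k in atTop, ∀ l, (fun l => z₀.1 l - 1) l ≤ B k l ∧ B k l ≤ (fun l => z₀.2.1 l + 1) l := by
    rw [eventually_all]
    intro l
    have h1 : ∀ᶠ k in atTop, z₀.1 l - 1 ≤ (z k).1 l := by
      have : Tendsto (fun k => (z k).1 l) atTop (nhds (z₀.1 l)) :=
        ((continuous_apply l).tendsto _).comp hlo
      exact this.eventually (eventually_ge_nhds (by linarith))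
    have h2 : ∀ᶠ k in atTop, (z k).2.1 l ≤ z₀.2.1 l + 1 := by
      have : Tendsto (fun k => (z k).2.1 l) atTop (nhds (z₀.2.1 l)) :=
        ((continuous_apply l).tendsto _).comp hhi
      exact this.eventually (eventually_le_nhds (by linarith))
    filter_upwards [h1, h2] with k hk1 hk2
    exact ⟨le_trans hk1 (hBbox k l).1, le_trans (hBbox k l).2 hk2⟩
  obtain ⟨K₀, hK₀⟩ := hev.exists_forall_of_atTop
  -- extract a convergent subsequence of the (shifted) witnesses
  have hmem : ∀ k, B (k + K₀) ∈ Icc (fun l => z₀.1 l - 1) (fun l => z₀.2.1 l + 1) := by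
    intro k
    rw [Set.mem_Icc]
    constructor <;> intro l
    · exact (hK₀ (k + K₀) (Nat.le_add_left _ _) l).1
    · exact (hK₀ (k + K₀) (Nat.le_add_left _ _) l).2
  obtain ⟨Blim, -, φ, hφ, hBlim⟩ := isCompact_Icc.tendsto_subseq hmem
  have hsub : StrictMono (fun k => φ k + K₀) := fun a b h => by
    have := hφ h; dsimp only; omega
  refine ⟨Blim, fun l => ?_, fun i => ?_⟩
  · -- box constraints in the limit
    have hcoord : Tendsto (fun k => B (φ k + K₀) l) atTop (nhds (Blim l)) :=
      ((continuous_apply l).tendsto _).comp hBlim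
    have hlo' : Tendsto (fun k => (z (φ k + K₀)).1 l) atTop (nhds (z₀.1 l)) :=
      (((continuous_apply l).tendsto _).comp hlo).comp hsub.tendsto_atTop
    have hhi' : Tendsto (fun k => (z (φ k + K₀)).2.1 l) atTop (nhds (z₀.2.1 l)) :=
      (((continuous_apply l).tendsto _).comp hhi).comp hsub.tendsto_atTop
    constructor
    · exact le_of_tendsto_of_tendsto' hlo' hcoord (fun k => (hBbox _ l).1)
    · exact le_of_tendsto_of_tendsto' hcoord hhi' (fun k => (hBbox _ l).2)
  · -- dot product constraints in the limit
    have ht' : Tendsto (fun k => (z (φ k + K₀)).2.2.2 i) atTop (nhds (z₀.2.2.2 i)) :=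
      (((continuous_apply i).tendsto _).comp ht).comp (hsub.tendsto_atTop)
    have hdot' : Tendsto (fun k => dot ((z (φ k + K₀)).2.2.1 i) (B (φ k + K₀))) atTop
        (nhds (dot (z₀.2.2.1 i) Blim)) := by
      unfold dot
      apply tendsto_finset_sum
      intro j _
      have h1 : Tendsto (fun k => (z (φ k + K₀)).2.2.1 i j) atTop (nhds (z₀.2.2.1 i j)) :=
        (((continuous_apply j).tendsto _).comp (((continuous_apply i).tendsto _).comp hyy)).comp
          hsub.tendsto_atTop
      have h2 : Tendsto (fun k => B (φ k + K₀) j) atTop (nhds (Blim j)) :=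
        ((continuous_apply j).tendsto _).comp hBlim
      exact h1.mul h2
    exact le_of_tendsto_of_tendsto' ht' hdot' (fun k => hBdot _ i)

lemma relax {N : ℕ} (lo hi : Fin n → ℝ) (yy : Fin N → Fin n → ℝ) (t : Fin N → ℝ)
    (h : ∀ q : Fin N → ℚ, (∀ i, (q i : ℝ) < t i) → (cSet lo hi yy (fun i => (q i : ℝ))).Nonempty) :
    (cSet lo hi yy t).Nonempty := by
  have hq : ∀ k : ℕ, ∀ i : Fin N, ∃ q : ℚ, t i - 1/(k+1) < (q:ℝ) ∧ (q:ℝ) < t i := by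
    intro k i
    apply exists_rat_btwn
    have : (0:ℝ) < 1/(k+1) := by positivity
    linarith
  choose q hq1 hq2 using hq
  have hz : ∀ k, (lo, hi, yy, fun i => ((q k i : ℚ) : ℝ)) ∈ NE n N := fun k =>
    h (q k) (fun i => hq2 k i)
  have hlim : Tendsto (fun k => (lo, hi, yy, fun i => ((q k i : ℚ) : ℝ))) atTop
      (nhds (lo, hi, yy, t)) := by
    refine Tendsto.prodMk_nhds tendsto_const_nhds (Tendsto.prodMk_nhds tendsto_const_nhds
      (Tendsto.prodMk_nhds tendsto_const_nhds ?_))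
    rw [tendsto_pi_nhds]
    intro i
    have hg : Tendsto (fun k : ℕ => t i - 1/(k+1)) atTop (nhds (t i)) := by
      have h0 : Tendsto (fun k : ℕ => (1:ℝ)/(k+1)) atTop (nhds 0) :=
        tendsto_one_div_add_atTop_nhds_zero_nat
      have h1 : Tendsto (fun _ : ℕ => t i) atTop (nhds (t i)) := tendsto_const_nhds
      have := h1.sub h0
      simpa using this
    exact tendsto_of_tendsto_of_tendsto_of_le_of_le hg tendsto_const_nhds
      (fun k => (hq1 k i).le) (fun k => (hq2 k i).le)
  exact (isClosed_NE N).mem_of_tendsto hlim (Filter.Eventually.of_forall hz)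


section Novikov
set_option linter.unusedSectionVars false


variable {X : Type*} [TopologicalSpace X] [MeasurableSpace X] [BorelSpace X]

/-- A countable family of sets is jointly Borel-separable if there are measurable supersets
with empty intersection. -/
def NSep (S : ℕ → Set X) : Prop :=
  ∃ V : ℕ → Set X, (∀ j, S j ⊆ V j) ∧ (∀ j, MeasurableSet (V j)) ∧ (⋂ j, V j) = ∅

lemma nsep_iUnion_update {S : ℕ → Set X} (j₀ : ℕ) (T : ℕ → Set X) (hS : S j₀ ⊆ ⋃ k, T k)
    (h : ∀ k : ℕ, NSep (Function.update S j₀ (T k))) : NSep S := by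
  choose V hVsub hVmeas hVempty using h
  classical
  refine ⟨fun j => if j = j₀ then ⋃ k, V k j₀ else ⋂ k, V k j, ?_, ?_, ?_⟩
  · intro j
    by_cases hj : j = j₀
    · subst hj
      simp only [if_pos rfl]
      refine hS.trans (iUnion_subset fun k => ?_)
      refine subset_trans ?_ (subset_iUnion _ k)
      have := hVsub k j
      rwa [Function.update_self] at this
    · simp only [if_neg hj]
      refine subset_iInter fun k => ?_
      have := hVsub k j
      rwa [Function.update_of_ne hj] at this
  · intro j
    by_cases hj : j = j₀
    · simp only [hj, if_pos rfl]
      exact MeasurableSet.iUnion fun k => hVmeas k j₀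
    · simp only [if_neg hj]
      exact MeasurableSet.iInter fun k => hVmeas k j
  · rw [eq_empty_iff_forall_notMem]
    intro x hx
    have hx0 : x ∈ ⋃ k, V k j₀ := by
      have := mem_iInter.1 hx j₀
      simpa only [if_pos rfl, if_true] using this
    obtain ⟨k, hk⟩ := mem_iUnion.1 hx0
    have : x ∈ ⋂ j, V k j := by
      refine mem_iInter.2 fun j => ?_
      by_cases hj : j = j₀
      · rwa [hj]
      · have := mem_iInter.1 hx j
        simp only [if_neg hj] at this
        exact mem_iInter.1 this k
    rw [hVempty k] at this
    exact this

theorem nsep_of_ranges [PolishSpace X] (g : ℕ → (ℕ → ℕ) → X) (hg : ∀ j, Continuous (g j))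
    (hI : (⋂ j, range (g j)) = ∅) : NSep (fun j => range (g j)) := by
  classical
  by_contra hc
  -- the refinement step: at index j₀, one can extend the cylinder keeping non-separability
  have I : ∀ (j₀ : ℕ) (p : ℕ → ℕ → ℕ) (m : ℕ → ℕ),
      ¬NSep (fun j => g j '' cylinder (p j) (m j)) →
      ∃ k : ℕ, ¬NSep (Function.update (fun j => g j '' cylinder (p j) (m j)) j₀
        (g j₀ '' cylinder (Function.update (p j₀) (m j₀) k) (m j₀ + 1))) := by
    intro j₀ p m
    contrapose!
    intro H
    apply nsep_iUnion_update j₀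
      (fun k => g j₀ '' cylinder (Function.update (p j₀) (m j₀) k) (m j₀ + 1))
    · rw [← image_iUnion, iUnion_cylinder_update (p j₀) (m j₀)]
    · exact H
  -- the space of "bad" states
  let A := { s : (ℕ → ℕ → ℕ) × (ℕ → ℕ) // ¬ NSep (fun j => g j '' cylinder (s.1 j) (s.2 j)) }
  have exF : ∀ (t : ℕ) (a : A), ∃ b : A,
      b.1.2 = Function.update a.1.2 (Nat.unpair t).1 (a.1.2 (Nat.unpair t).1 + 1) ∧
      ∃ k, b.1.1 = Function.update a.1.1 (Nat.unpair t).1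
        (Function.update (a.1.1 (Nat.unpair t).1) (a.1.2 (Nat.unpair t).1) k) := by
    rintro t ⟨⟨p, m⟩, hpm⟩
    obtain ⟨k, hk⟩ := I (Nat.unpair t).1 p m hpm
    refine ⟨⟨⟨Function.update p (Nat.unpair t).1
        (Function.update (p (Nat.unpair t).1) (m (Nat.unpair t).1) k),
        Function.update m (Nat.unpair t).1 (m (Nat.unpair t).1 + 1)⟩, ?_⟩, rfl, k, rfl⟩
    convert hk using 2
    funext j
    by_cases hj : j = (Nat.unpair t).1
    · subst hj
      simp only [Function.update_self]
    · simp only [Function.update_of_ne hj]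
  choose F hF2 hF1 using exF
  have a0 : A := ⟨⟨fun _ _ => 0, fun _ => 0⟩, by
    simpa only [cylinder_zero, image_univ] using hc⟩
  let st : ℕ → A := fun t => Nat.rec a0 F t
  have hstS : ∀ t, st (t + 1) = F t (st t) := fun t => rfl
  set len : ℕ → ℕ → ℕ := fun t j => (st t).1.2 j with hlen
  set pt : ℕ → ℕ → ℕ → ℕ := fun t j => (st t).1.1 j with hpt
  -- length evolution
  have L1 : ∀ t j, len (t+1) j = if j = (Nat.unpair t).1 then len t j + 1 else len t j := by
    intro t j
    have := hF2 t (st t)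
    rw [← hstS t] at this
    rw [hlen]
    simp only [this, Function.update_apply]
    split_ifs with h
    · subst h; rfl
    · rfl
  -- point coherence
  have L2 : ∀ t j i, i < len t j → pt (t+1) j i = pt t j i := by
    intro t j i hi
    obtain ⟨k, hk⟩ := hF1 t (st t)
    rw [← hstS t] at hk
    rw [hpt]
    simp only [hk]
    by_cases hj : j = (Nat.unpair t).1
    · subst hj
      rw [Function.update_self, Function.update_of_ne hi.ne]
    · rw [Function.update_of_ne hj]
  -- monotonicity
  have L3 : ∀ t t', t ≤ t' → ∀ j, len t j ≤ len t' j ∧ ∀ i < len t j, pt t' j i = pt t j i := by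
    intro t t' htt'
    induction t', htt' using Nat.le_induction with
    | base => exact fun j => ⟨le_rfl, fun i _ => rfl⟩
    | succ t' htt' IH =>
      intro j
      obtain ⟨IH1, IH2⟩ := IH j
      constructor
      · rw [L1]
        split_ifs with h
        · omega
        · exact IH1
      · intro i hi
        rw [L2 t' j i (lt_of_lt_of_le hi IH1)]
        exact IH2 i hi
  -- lengths tend to infinity
  have L4 : ∀ j m, ∃ t, m ≤ len t j := by
    intro j m
    induction m with
    | zero => exact ⟨0, Nat.zero_le _⟩
    | succ m IH =>
      obtain ⟨t, ht⟩ := IH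
      refine ⟨Nat.pair j t + 1, ?_⟩
      rw [L1]
      have h1 : j = (Nat.unpair (Nat.pair j t)).1 := by rw [Nat.unpair_pair]
      rw [if_pos h1]
      have := (L3 t (Nat.pair j t) (Nat.right_le_pair j t) j).1
      omega
  -- the limit points
  let σ : ℕ → ℕ → ℕ := fun j i => pt (L4 j (i+1)).choose j i
  have L5 : ∀ t j i, i < len t j → σ j i = pt t j i := by
    intro t j i hi
    have h1 := (L4 j (i+1)).choose_spec
    set t₁ := (L4 j (i+1)).choose
    have e1 : pt (max t t₁) j i = pt t₁ j i := (L3 t₁ (max t t₁) (le_max_right _ _) j).2 i (by omega)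
    have e2 : pt (max t t₁) j i = pt t j i := (L3 t (max t t₁) (le_max_left _ _) j).2 i hi
    simp only [σ]
    rw [← e1, e2]
  have L6 : ∀ t j, cylinder (σ j) (len t j) = cylinder (pt t j) (len t j) := by
    intro t j
    rw [← mem_cylinder_iff_eq, mem_cylinder_iff]
    intro i hi
    exact L5 t j i hi
  have M : ∀ t, ¬ NSep (fun j => g j '' cylinder (σ j) (len t j)) := by
    intro t
    have := (st t).2
    convert this using 3 with j
    rw [L6 t j]
  -- endgame
  by_cases hall : ∀ j, g j (σ j) = g 0 (σ 0)
  · have : g 0 (σ 0) ∈ ⋂ j, range (g j) := by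
      refine mem_iInter.2 fun j => ⟨σ j, hall j⟩
    rw [hI] at this
    exact this
  · push_neg at hall
    obtain ⟨j₁, hne⟩ := hall
    have hj₁ : j₁ ≠ 0 := by
      intro h
      exact hne (by rw [h])
    obtain ⟨u, v, u_open, v_open, xu, yv, huv⟩ := t2_separation hne
    letI : MetricSpace (ℕ → ℕ) := metricSpaceNatNat
    obtain ⟨εx, εxpos, hεx⟩ : ∃ εx : ℝ, εx > 0 ∧ Metric.ball (σ j₁) εx ⊆ g j₁ ⁻¹' u := by
      apply Metric.mem_nhds_iff.1
      exact (hg j₁).continuousAt.preimage_mem_nhds (u_open.mem_nhds xu)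
    obtain ⟨εy, εypos, hεy⟩ : ∃ εy : ℝ, εy > 0 ∧ Metric.ball (σ 0) εy ⊆ g 0 ⁻¹' v := by
      apply Metric.mem_nhds_iff.1
      exact (hg 0).continuousAt.preimage_mem_nhds (v_open.mem_nhds yv)
    obtain ⟨nn, hnn⟩ : ∃ nn : ℕ, (1 / 2 : ℝ) ^ nn < min εx εy :=
      exists_pow_lt_of_lt_one (lt_min εxpos εypos) (by norm_num)
    obtain ⟨t₁, ht₁⟩ := L4 j₁ nn
    obtain ⟨t₂, ht₂⟩ := L4 0 nn
    set t := max t₁ t₂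
    have hl₁ : nn ≤ len t j₁ := le_trans ht₁ (L3 t₁ t (le_max_left _ _) j₁).1
    have hl₂ : nn ≤ len t 0 := le_trans ht₂ (L3 t₂ t (le_max_right _ _) 0).1
    apply M t
    refine ⟨fun j => if j = j₁ then u else if j = 0 then v else univ, ?_, ?_, ?_⟩
    · intro j
      dsimp only
      by_cases h1 : j = j₁
      · subst h1
        simp only [if_pos rfl]
        rw [image_subset_iff]
        refine subset_trans (cylinder_anti _ hl₁) (subset_trans ?_ hεx)
        intro z hz
        rw [mem_cylinder_iff_dist_le] at hz
        have : dist z (σ j) ≤ (1/2 : ℝ)^nn := hz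
        exact Metric.mem_ball.2 (lt_of_le_of_lt this (lt_of_lt_of_le hnn (min_le_left _ _)))
      · by_cases h2 : j = 0
        · subst h2
          simp only [if_neg h1, if_pos rfl]
          rw [image_subset_iff]
          refine subset_trans (cylinder_anti _ hl₂) (subset_trans ?_ hεy)
          intro z hz
          rw [mem_cylinder_iff_dist_le] at hz
          exact Metric.mem_ball.2 (lt_of_le_of_lt hz (lt_of_lt_of_le hnn (min_le_right _ _)))
        · simp only [if_neg h1, if_neg h2]
          exact subset_univ _
    · intro j
      dsimp only
      split_ifs
      · exact u_open.measurableSet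
      · exact v_open.measurableSet
      · exact MeasurableSet.univ
    · rw [eq_empty_iff_forall_notMem]
      intro x hx
      have h1 : x ∈ u := by
        have := mem_iInter.1 hx j₁
        simpa only [if_pos rfl, if_true] using this
      have h2 : x ∈ v := by
        have := mem_iInter.1 hx 0
        simpa only [if_neg (Ne.symm hj₁), if_pos rfl, if_true] using this
      exact absurd (huv.ne_of_mem h1 h2) (fun h => h rfl)

theorem novikov_nsep [PolishSpace X] (A : ℕ → Set X) (hA : ∀ j, AnalyticSet (A j))
    (h : (⋂ j, A j) = ∅) : NSep A := by
  classical
  by_cases he : ∃ j₀, A j₀ = ∅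
  · obtain ⟨j₀, hj₀⟩ := he
    refine ⟨fun j => if j = j₀ then ∅ else univ, ?_, ?_, ?_⟩
    · intro j
      dsimp only
      split_ifs with hj
      · rw [hj, hj₀]
      · exact subset_univ _
    · intro j
      dsimp only
      split_ifs
      · exact MeasurableSet.empty
      · exact MeasurableSet.univ
    · rw [eq_empty_iff_forall_notMem]
      intro x hx
      have := mem_iInter.1 hx j₀
      simpa only [if_pos rfl, if_true, mem_empty_iff_false] using this
  · push_neg at he
    have hg : ∀ j, ∃ g : (ℕ → ℕ) → X, Continuous g ∧ range g = A j := by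
      intro j
      have := hA j
      rw [AnalyticSet_def] at this
      rcases this with h1 | h2
      · exact absurd h1 (nonempty_iff_ne_empty.1 (he j))
      · exact h2
    choose g hgc hgr using hg
    have := nsep_of_ranges g hgc (by rw [funext hgr]; exact h)
    obtain ⟨V, h1, h2, h3⟩ := this
    exact ⟨V, fun j => (hgr j) ▸ h1 j, h2, h3⟩

/-- Measurable selection of an index escaping each set of a countable family
of analytic sets with empty intersection. -/
theorem exists_measurable_index [PolishSpace X] (A : ℕ → Set X) (hA : ∀ j, AnalyticSet (A j))
    (h : ∀ x, ∃ j, x ∉ A j) : ∃ J : X → ℕ, Measurable J ∧ ∀ x, x ∉ A (J x) := by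
  classical
  have hemp : (⋂ j, A j) = ∅ := by
    rw [eq_empty_iff_forall_notMem]
    intro x hx
    obtain ⟨j, hj⟩ := h x
    exact hj (mem_iInter.1 hx j)
  obtain ⟨V, hVsub, hVmeas, hVempty⟩ := novikov_nsep A hA hemp
  have hx : ∀ x, ∃ j, x ∉ V j := by
    intro x
    by_contra hcon
    push_neg at hcon
    have : x ∈ ⋂ j, V j := mem_iInter.2 hcon
    rw [hVempty] at this
    exact this
  refine ⟨fun x => Nat.find (hx x), ?_, ?_⟩
  · apply measurable_find
    intro k
    exact (hVmeas k).compl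
  · intro x
    exact fun hmem => Nat.find_spec (hx x) (hVsub _ hmem)


end Novikov

section Sandwich

variable {X : Type*} [TopologicalSpace X] [T2Space X] [MeasurableSpace X] [OpensMeasurableSpace X]

/-- Sandwich a Borel function between two functions with analytic super/sub-level sets. -/
theorem exists_measurable_between (a b : X → ℝ) (hab : ∀ x, a x ≤ b x)
    (hU : ∀ q : ℚ, AnalyticSet {x | (q : ℝ) < a x}) (hV : ∀ q : ℚ, AnalyticSet {x | b x < q}) :
    ∃ w : X → ℝ, Measurable w ∧ ∀ x, a x ≤ w x ∧ w x ≤ b x := by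
  have hsep : ∀ q : ℚ, MeasurablySeparable {x | (q : ℝ) < a x} {x | b x < q} := by
    intro q
    apply (hU q).measurablySeparable (hV q)
    rw [Set.disjoint_left]
    intro x hx1 hx2
    simp only [mem_setOf_eq] at hx1 hx2
    linarith [hab x]
  choose W hW1 hW2 hW3 using hsep
  have hmemW : ∀ (x : X) (q : ℚ), (q : ℝ) < a x → x ∈ W q := fun x q hq => hW1 q hq
  have hnotW : ∀ (x : X) (q : ℚ), x ∈ W q → (q : ℝ) ≤ b x := by
    intro x q hx
    by_contra hcon
    push_neg at hcon
    exact (Set.disjoint_left.1 (hW2 q)) hcon hx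
  set S : X → Set ℝ := fun x => (fun q : ℚ => (q : ℝ)) '' {q | x ∈ W q} with hS
  have hSne : ∀ x, (S x).Nonempty := by
    intro x
    obtain ⟨q, hq⟩ := exists_rat_lt (a x)
    exact ⟨(q : ℝ), ⟨q, hmemW x q hq, rfl⟩⟩
  have hSbdd : ∀ x, BddAbove (S x) := by
    intro x
    refine ⟨b x, ?_⟩
    rintro z ⟨q, hq, rfl⟩
    exact hnotW x q hq
  refine ⟨fun x => sSup (S x), ?_, fun x => ⟨?_, ?_⟩⟩
  · apply measurable_of_Ioi
    intro γ
    have : (fun x => sSup (S x)) ⁻¹' Ioi γ = ⋃ (q : ℚ) (_ : γ < (q : ℝ)), W q := by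
      ext x
      simp only [mem_preimage, mem_Ioi, mem_iUnion]
      constructor
      · intro hγ
        obtain ⟨z, hz, hγz⟩ := exists_lt_of_lt_csSup (hSne x) hγ
        obtain ⟨q, hq, rfl⟩ := hz
        exact ⟨q, hγz, hq⟩
      · rintro ⟨q, hγq, hq⟩
        exact lt_of_lt_of_le hγq (le_csSup (hSbdd x) ⟨q, hq, rfl⟩)
    rw [this]
    exact MeasurableSet.iUnion fun q => MeasurableSet.iUnion fun _ => hW3 q
  · by_contra hcon
    push_neg at hcon
    obtain ⟨q, hq1, hq2⟩ := exists_rat_btwn hcon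
    exact absurd (le_csSup (hSbdd x) ⟨q, hmemW x q hq2, rfl⟩) (not_le.2 hq1)
  · exact csSup_le (hSne x) (by rintro z ⟨q, hq, rfl⟩; exact hnotW x q hq)

end Sandwich

section Inter

lemma analyticSet_inter {α : Type*} [TopologicalSpace α] [T2Space α] {s t : Set α}
    (hs : AnalyticSet s) (ht : AnalyticSet t) : AnalyticSet (s ∩ t) := by
  have : s ∩ t = ⋂ b : Bool, (if b then s else t) := by
    ext x
    simp only [mem_inter_iff, mem_iInter, Bool.forall_bool, if_true, if_false]
    tauto
  rw [this]
  exact AnalyticSet.iInter fun b => by cases b <;> simp only [if_true, if_false, Bool.false_eq_true] <;> assumption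

end Inter

section MainLemma

variable {n : ℕ} {X : Type*} [TopologicalSpace X] [PolishSpace X] [MeasurableSpace X]
  [BorelSpace X]

/-- The set of `x` where the constraint set (box + analytic family of halfspaces)
is empty, is analytic. -/
theorem analyticSet_empty_cSet (Y : Set (Fin n → ℝ)) (hYne : Y.Nonempty)
    (f : X → (Fin n → ℝ) → ℝ)
    (husa : ∀ γ : ℝ, AnalyticSet {p : X × (Fin n → ℝ) | p.2 ∈ Y ∧ γ < f p.1 p.2})
    (ρ : X → ℝ) (hρ : Measurable ρ)
    (lo hi : X → Fin n → ℝ) (hlo : Measurable lo) (hhi : Measurable hi) :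
    AnalyticSet {x | ¬ (cSet (lo x) (hi x) (fun y : Y => (y : Fin n → ℝ))
      (fun y : Y => f x (y : Fin n → ℝ) - ρ x)).Nonempty} := by
  classical
  haveI : Nonempty Y := hYne.to_subtype
  set N := n + 1 with hN
  -- the rationalized constraint sets
  set D : X → (Fin N → Fin n → ℝ) → (Fin N → ℚ) → Set (Fin n → ℝ) :=
    fun x yy q => cSet (lo x) (hi x) yy (fun i => (q i : ℝ)) with hD
  -- main set-theoretic identity
  have key : {x | ¬ (cSet (lo x) (hi x) (fun y : Y => (y : Fin n → ℝ))
      (fun y : Y => f x (y : Fin n → ℝ) - ρ x)).Nonempty} =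
      ⋃ q : Fin N → ℚ, Prod.fst ''
        ((⋂ i : Fin N, {p : X × (Fin N → Fin n → ℝ) |
            p.2 i ∈ Y ∧ (q i : ℝ) + ρ p.1 < f p.1 (p.2 i)}) ∩
          {p : X × (Fin N → Fin n → ℝ) | ¬ (D p.1 p.2 q).Nonempty}) := by
    ext x
    simp only [mem_setOf_eq, mem_iUnion]
    constructor
    · intro hx
      -- Helly's theorem: a finite subfamily already has empty intersection
      set C : Y → Set (Fin n → ℝ) := fun y =>
        cSet (lo x) (hi x) (fun _ : Unit => (y : Fin n → ℝ))
          (fun _ : Unit => f x (y : Fin n → ℝ) - ρ x) with hC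
      have hCap : (⋂ y : Y, C y) = cSet (lo x) (hi x) (fun y : Y => (y : Fin n → ℝ))
          (fun y : Y => f x (y : Fin n → ℝ) - ρ x) := by
        ext B
        simp only [mem_iInter, hC, cSet, mem_setOf_eq]
        constructor
        · intro h
          obtain ⟨y₀⟩ := (inferInstance : Nonempty Y)
          exact ⟨(h y₀).1, fun y => (h y).2 ()⟩
        · intro h y
          exact ⟨h.1, fun _ => h.2 y⟩
      have hih : ¬ ∀ I : Finset Y, I.card ≤ Module.finrank ℝ (Fin n → ℝ) + 1 →
          (⋂ y ∈ I, C y).Nonempty := by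
        intro hI
        apply hx
        rw [← hCap]
        exact Convex.helly_theorem_compact' (fun _ => convex_cSet) (fun _ => isCompact_cSet) hI
      push_neg at hih
      obtain ⟨I, hIcard, hIempty⟩ := hih
      rw [Module.finrank_fin_fun] at hIcard
      have hIne : I.Nonempty := by
        rcases I.eq_empty_or_nonempty with h | h
        · exfalso
          rw [h] at hIempty
          simp only [Finset.notMem_empty, iInter_of_empty, iInter_univ] at hIempty
          have : (0 : Fin n → ℝ) ∈ (∅ : Set (Fin n → ℝ)) := hIempty ▸ mem_univ 0
          exact this
        · exact h
      obtain ⟨y₀, hy₀⟩ := hIne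
      -- a tuple of length N = n+1 covering I
      set gg : Fin N → Y := fun i =>
        if h : (i : ℕ) < I.toList.length then I.toList.get ⟨i, h⟩ else y₀ with hgg
      have hcover : ∀ z ∈ I, ∃ i : Fin N, gg i = z := by
        intro z hz
        have hzl : z ∈ I.toList := Finset.mem_toList.2 hz
        obtain ⟨idx, hidx⟩ := List.mem_iff_get.1 hzl
        have hlen : I.toList.length ≤ N := by
          rw [Finset.length_toList]
          omega
        refine ⟨⟨idx, lt_of_lt_of_le idx.2 hlen⟩, ?_⟩
        rw [hgg]
        dsimp only
        rw [dif_pos idx.2]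
        rw [← hidx]
      -- the empty finite subfamily, as a `cSet` with real thresholds
      have hDempty : ¬ (cSet (lo x) (hi x) (fun i : Fin N => ((gg i : Fin n → ℝ)))
          (fun i : Fin N => f x ((gg i : Fin n → ℝ)) - ρ x)).Nonempty := by
        rintro ⟨B, hBbox, hBdot⟩
        rw [eq_empty_iff_forall_notMem] at hIempty
        apply hIempty B
        rw [mem_iInter₂]
        intro z hz
        obtain ⟨i, hi⟩ := hcover z hz
        rw [hC]
        refine ⟨hBbox, fun _ => ?_⟩
        rw [← hi]
        exact hBdot i
      -- rational relaxation
      have hq : ∃ q : Fin N → ℚ, (∀ i, (q i : ℝ) < f x ((gg i : Fin n → ℝ)) - ρ x) ∧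
          ¬ (D x (fun i => (gg i : Fin n → ℝ)) q).Nonempty := by
        by_contra hcon
        push_neg at hcon
        apply hDempty
        apply relax
        intro q hq'
        exact hcon q hq'
      obtain ⟨q, hq1, hq2⟩ := hq
      refine ⟨q, (x, fun i => (gg i : Fin n → ℝ)), ⟨?_, ?_⟩, rfl⟩
      · rw [mem_iInter]
        intro i
        exact ⟨(gg i).2, by linarith [hq1 i]⟩
      · exact hq2
    · rintro ⟨q, p, ⟨hpin, hpD⟩, hpx⟩
      rintro ⟨B, hBbox, hBdot⟩
      apply hpD
      refine ⟨B, ?_, ?_⟩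
      · rw [hpx]; exact hBbox
      · intro i
        rw [mem_iInter] at hpin
        obtain ⟨hYi, hfi⟩ := hpin i
        rw [hpx] at hfi
        have := hBdot ⟨p.2 i, hYi⟩
        simp only at this
        calc (q i : ℝ) ≤ f x (p.2 i) - ρ x := by linarith
        _ ≤ dot (p.2 i) B := this
  rw [key]
  -- analyticity of the right-hand side
  apply AnalyticSet.iUnion
  intro q
  apply AnalyticSet.image_of_continuous _ continuous_fst
  apply analyticSet_inter
  · apply AnalyticSet.iInter
    intro i
    -- decompose over a rational threshold
    have : {p : X × (Fin N → Fin n → ℝ) | p.2 i ∈ Y ∧ (q i : ℝ) + ρ p.1 < f p.1 (p.2 i)} =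
        ⋃ q' : ℚ, ((fun p : X × (Fin N → Fin n → ℝ) => (p.1, p.2 i)) ⁻¹'
            {pp : X × (Fin n → ℝ) | pp.2 ∈ Y ∧ (q' : ℝ) < f pp.1 pp.2}) ∩
          ({x | ρ x ≤ (q' : ℝ) - (q i : ℝ)} ×ˢ (univ : Set (Fin N → Fin n → ℝ))) := by
      ext p
      simp only [mem_setOf_eq, mem_iUnion, mem_inter_iff, mem_preimage, mem_prod, mem_univ,
        and_true]
      constructor
      · rintro ⟨hY, hf⟩
        obtain ⟨q', h1, h2⟩ := exists_rat_btwn hf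
        exact ⟨q', ⟨hY, h2⟩, by linarith⟩
      · rintro ⟨q', ⟨hY, h2⟩, h1⟩
        exact ⟨hY, by linarith⟩
    rw [this]
    apply AnalyticSet.iUnion
    intro q'
    apply analyticSet_inter
    · exact (husa (q' : ℝ)).preimage
        (continuous_fst.prodMk ((continuous_apply i).comp continuous_snd))
    · exact (((measurableSet_le hρ measurable_const)).prod MeasurableSet.univ).analyticSet
  · -- the rationalized emptiness condition is Borel
    have hψ : Measurable (fun p : X × (Fin N → Fin n → ℝ) =>
        ((lo p.1, hi p.1, p.2, fun i => (q i : ℝ)) :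
          (Fin n → ℝ) × (Fin n → ℝ) × (Fin N → Fin n → ℝ) × (Fin N → ℝ))) := by
      refine Measurable.prodMk (hlo.comp measurable_fst) (Measurable.prodMk
        (hhi.comp measurable_fst) (Measurable.prodMk measurable_snd measurable_const))
    have heq : {p : X × (Fin N → Fin n → ℝ) | ¬ (D p.1 p.2 q).Nonempty} =
        (fun p : X × (Fin N → Fin n → ℝ) =>
          ((lo p.1, hi p.1, p.2, fun i => (q i : ℝ)) :
            (Fin n → ℝ) × (Fin n → ℝ) × (Fin N → Fin n → ℝ) × (Fin N → ℝ))) ⁻¹' (NE n N)ᶜ := by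
      rfl
    rw [heq]
    exact (hψ ((isClosed_NE N).measurableSet.compl)).analyticSet

end MainLemma

section Assembly

variable {n : ℕ} {X : Type*} [TopologicalSpace X] [PolishSpace X] [MeasurableSpace X]
  [BorelSpace X]

theorem main_selection (Y : Set (Fin n → ℝ)) (hYne : Y.Nonempty)
    (f : X → (Fin n → ℝ) → ℝ)
    (husa : ∀ γ : ℝ, AnalyticSet {p : X × (Fin n → ℝ) | p.2 ∈ Y ∧ γ < f p.1 p.2})
    (b : X → Fin n → ℝ) (c : X → ℝ)
    (hdom : ∀ x, ∀ y ∈ Y, f x y ≤ (∑ i, b x i * y i) + c x) :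
    ∃ (B : X → Fin n → ℝ) (C : X → ℝ), Measurable B ∧ Measurable C ∧
      ∀ x, ∀ y ∈ Y, f x y ≤ (∑ i, B x i * y i) + C x := by
  classical
  have hJr : Measurable (fun j : ℕ => (j : ℝ)) := measurable_from_top
  -- Step 1 : a measurable bound on the box size and budget, via Novikov separation
  set S : ℕ → Set X := fun j => {x | ¬ (cSet (fun _ : Fin n => -(j : ℝ)) (fun _ : Fin n => (j : ℝ))
      (fun y : Y => (y : Fin n → ℝ)) (fun y : Y => f x (y : Fin n → ℝ) - (j : ℝ))).Nonempty}
    with hSdef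
  have hSana : ∀ j, AnalyticSet (S j) := by
    intro j
    exact analyticSet_empty_cSet Y hYne f husa (fun _ => (j : ℝ)) measurable_const
      (fun _ _ => -(j : ℝ)) (fun _ _ => (j : ℝ)) measurable_const measurable_const
  have hesc : ∀ x, ∃ j, x ∉ S j := by
    intro x
    set R : ℝ := |c x| + ∑ l, |b x l| with hR
    have hRb : ∀ l, |b x l| ≤ R := by
      intro l
      have h1 : |b x l| ≤ ∑ l, |b x l| :=
        Finset.single_le_sum (fun i _ => abs_nonneg (b x i)) (Finset.mem_univ l)
      have h2 : (0:ℝ) ≤ |c x| := abs_nonneg _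
      rw [hR]; linarith
    have hRc : c x ≤ R := by
      have h1 : (0:ℝ) ≤ ∑ l, |b x l| := Finset.sum_nonneg fun i _ => abs_nonneg _
      have h2 : c x ≤ |c x| := le_abs_self _
      rw [hR]; linarith
    refine ⟨⌈R⌉₊, ?_⟩
    intro hmem
    apply hmem
    refine ⟨b x, ?_, ?_⟩
    · intro l
      have := hRb l
      have hceil : R ≤ (⌈R⌉₊ : ℝ) := Nat.le_ceil R
      rw [abs_le] at this
      constructor
      · dsimp only; linarith [this.1]
      · dsimp only; linarith [this.2]
    · intro y
      have hy := hdom x (y : Fin n → ℝ) y.2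
      have hceil : R ≤ (⌈R⌉₊ : ℝ) := Nat.le_ceil R
      have hdot : dot (y : Fin n → ℝ) (b x) = ∑ i, b x i * (y : Fin n → ℝ) i := by
        unfold dot
        exact Finset.sum_congr rfl fun i _ => mul_comm _ _
      show f x (y : Fin n → ℝ) - ((⌈R⌉₊ : ℕ) : ℝ) ≤ dot (y : Fin n → ℝ) (b x)
      rw [hdot]
      linarith
  obtain ⟨J, hJmeas, hJ⟩ := exists_measurable_index S hSana hesc
  have hK0 : ∀ x, (cSet (fun _ : Fin n => -((J x : ℕ) : ℝ)) (fun _ : Fin n => ((J x : ℕ) : ℝ))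
      (fun y : Y => (y : Fin n → ℝ)) (fun y : Y => f x (y : Fin n → ℝ) - ((J x : ℕ) : ℝ))).Nonempty :=
    fun x => not_not.1 (hJ x)
  have hJR : Measurable (fun x => ((J x : ℕ) : ℝ)) := hJr.comp hJmeas
  -- Step 2 : fix the coordinates one by one
  have hstage : ∀ i, i ≤ n → ∃ v : X → Fin n → ℝ, Measurable v ∧ ∀ x,
      (cSet (fun l : Fin n => if (l : ℕ) < i then v x l else -((J x : ℕ) : ℝ))
        (fun l : Fin n => if (l : ℕ) < i then v x l else ((J x : ℕ) : ℝ))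
        (fun y : Y => (y : Fin n → ℝ))
        (fun y : Y => f x (y : Fin n → ℝ) - ((J x : ℕ) : ℝ))).Nonempty := by
    intro i
    induction i with
    | zero =>
      intro _
      refine ⟨fun _ _ => 0, measurable_const, fun x => ?_⟩
      simpa only [Nat.not_lt_zero, if_false] using hK0 x
    | succ i IH =>
      intro hsucc
      have hin : i < n := hsucc
      obtain ⟨v, hv, hvne⟩ := IH (le_of_lt hin)
      set i' : Fin n := ⟨i, hin⟩ with hi'
      set lo₀ : X → Fin n → ℝ :=
        fun x l => if (l : ℕ) < i then v x l else -((J x : ℕ) : ℝ) with hlo₀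
      set hi₀ : X → Fin n → ℝ :=
        fun x l => if (l : ℕ) < i then v x l else ((J x : ℕ) : ℝ) with hhi₀
      have hlo₀m : Measurable lo₀ := by
        apply measurable_pi_lambda
        intro l
        by_cases hl : (l : ℕ) < i
        · simp only [hlo₀, if_pos hl]
          exact (measurable_pi_apply l).comp hv
        · simp only [hlo₀, if_neg hl]
          exact hJR.neg
      have hhi₀m : Measurable hi₀ := by
        apply measurable_pi_lambda
        intro l
        by_cases hl : (l : ℕ) < i
        · simp only [hhi₀, if_pos hl]
          exact (measurable_pi_apply l).comp hv
        · simp only [hhi₀, if_neg hl]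
          exact hJR
      set K : X → Set (Fin n → ℝ) := fun x => cSet (lo₀ x) (hi₀ x)
        (fun y : Y => (y : Fin n → ℝ)) (fun y : Y => f x (y : Fin n → ℝ) - ((J x : ℕ) : ℝ))
        with hKdef
      have hKne : ∀ x, (K x).Nonempty := hvne
      have hKcomp : ∀ x, IsCompact ((fun B : Fin n → ℝ => B i') '' K x) :=
        fun x => (isCompact_cSet).image (continuous_apply i')
      have hKimage_ne : ∀ x, ((fun B : Fin n → ℝ => B i') '' K x).Nonempty :=
        fun x => (hKne x).image _
      set a : X → ℝ := fun x => sInf ((fun B : Fin n → ℝ => B i') '' K x) with ha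
      set bb : X → ℝ := fun x => sSup ((fun B : Fin n → ℝ => B i') '' K x) with hbb
      have ha_mem : ∀ x, a x ∈ (fun B : Fin n → ℝ => B i') '' K x :=
        fun x => (hKcomp x).sInf_mem (hKimage_ne x)
      have hb_mem : ∀ x, bb x ∈ (fun B : Fin n → ℝ => B i') '' K x :=
        fun x => (hKcomp x).sSup_mem (hKimage_ne x)
      have hab : ∀ x, a x ≤ bb x := by
        intro x
        obtain ⟨z, hz⟩ := hKimage_ne x
        exact le_trans (csInf_le (hKcomp x).bddBelow hz) (le_csSup (hKcomp x).bddAbove hz)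
      -- level sets of a and bb
      have hUa : ∀ q : ℚ, AnalyticSet {x | (q : ℝ) < a x} := by
        intro q
        have heq : {x | (q : ℝ) < a x} = {x | ¬ (cSet (lo₀ x)
            (fun l : Fin n => if (l : ℕ) < i then v x l else
              if (l : ℕ) = i then min (q : ℝ) ((J x : ℕ) : ℝ) else ((J x : ℕ) : ℝ))
            (fun y : Y => (y : Fin n → ℝ))
            (fun y : Y => f x (y : Fin n → ℝ) - ((J x : ℕ) : ℝ))).Nonempty} := by
          ext x
          simp only [mem_setOf_eq]
          constructor
          · intro hq
            rintro ⟨B, hbox, hdots⟩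
            have hBK : B ∈ K x := by
              refine ⟨fun l => ?_, hdots⟩
              have hb := hbox l
              rw [mem_Icc] at hb ⊢
              obtain ⟨hb1, hb2⟩ := hb
              dsimp only at hb2
              constructor
              · exact hb1
              · show B l ≤ hi₀ x l
                simp only [hhi₀]
                by_cases hl : (l : ℕ) < i
                · rw [if_pos hl] at hb2 ⊢
                  exact hb2
                · rw [if_neg hl] at hb2 ⊢
                  by_cases hl2 : (l : ℕ) = i
                  · rw [if_pos hl2] at hb2
                    exact le_trans hb2 (min_le_right _ _)
                  · rw [if_neg hl2] at hb2
                    exact hb2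
            have hBi : B i' ≤ (q : ℝ) := by
              have hb := (hbox i').2
              dsimp only at hb
              have hni : ¬ ((i' : ℕ) < i) := by simp [hi']
              have hei : ((i' : ℕ) = i) := by simp [hi']
              rw [if_neg hni, if_pos hei] at hb
              exact le_trans hb (min_le_left _ _)
            have : a x ≤ B i' := csInf_le (hKcomp x).bddBelow ⟨B, hBK, rfl⟩
            linarith
          · intro hne
            by_contra hcon
            push_neg at hcon
            apply hne
            obtain ⟨B, hBK, hBa⟩ := ha_mem x
            refine ⟨B, fun l => ?_, hBK.2⟩
            have hb := hBK.1 l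
            rw [mem_Icc] at hb ⊢
            obtain ⟨hb1, hb2⟩ := hb
            refine ⟨hb1, ?_⟩
            have hb2' : B l ≤ (if (l : ℕ) < i then v x l else ((J x : ℕ) : ℝ)) := by
              simpa only [hhi₀] using hb2
            show B l ≤ (fun l : Fin n => if (l : ℕ) < i then v x l else
              if (l : ℕ) = i then min (q : ℝ) ((J x : ℕ) : ℝ) else ((J x : ℕ) : ℝ)) l
            dsimp only
            by_cases hl : (l : ℕ) < i
            · rw [if_pos hl] at hb2' ⊢
              exact hb2'
            · rw [if_neg hl] at hb2' ⊢
              by_cases hl2 : (l : ℕ) = i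
              · have hli : l = i' := Fin.ext (by simp [hi', hl2])
                have hBa' : B i' = a x := hBa
                rw [if_pos hl2]
                refine le_min ?_ hb2'
                rw [hli, hBa']
                exact hcon
              · rw [if_neg hl2]
                exact hb2'
        rw [heq]
        apply analyticSet_empty_cSet Y hYne f husa _ hJR _ _ hlo₀m
        apply measurable_pi_lambda
        intro l
        by_cases hl : (l : ℕ) < i
        · simp only [if_pos hl]
          exact (measurable_pi_apply l).comp hv
        · by_cases hl2 : (l : ℕ) = i
          · simp only [if_neg hl, if_pos hl2]
            exact measurable_const.min hJR
          · simp only [if_neg hl, if_neg hl2]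
            exact hJR
      have hVb : ∀ q : ℚ, AnalyticSet {x | bb x < (q : ℝ)} := by
        intro q
        have heq : {x | bb x < (q : ℝ)} = {x | ¬ (cSet
            (fun l : Fin n => if (l : ℕ) < i then v x l else
              if (l : ℕ) = i then max (q : ℝ) (-((J x : ℕ) : ℝ)) else -((J x : ℕ) : ℝ))
            (hi₀ x)
            (fun y : Y => (y : Fin n → ℝ))
            (fun y : Y => f x (y : Fin n → ℝ) - ((J x : ℕ) : ℝ))).Nonempty} := by
          ext x
          simp only [mem_setOf_eq]
          constructor
          · intro hq
            rintro ⟨B, hbox, hdots⟩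
            have hBK : B ∈ K x := by
              refine ⟨fun l => ?_, hdots⟩
              have hb := hbox l
              rw [mem_Icc] at hb ⊢
              obtain ⟨hb1, hb2⟩ := hb
              dsimp only at hb1
              refine ⟨?_, hb2⟩
              show lo₀ x l ≤ B l
              simp only [hlo₀]
              by_cases hl : (l : ℕ) < i
              · rw [if_pos hl] at hb1 ⊢
                exact hb1
              · rw [if_neg hl] at hb1 ⊢
                by_cases hl2 : (l : ℕ) = i
                · rw [if_pos hl2] at hb1
                  exact le_trans (le_max_right _ _) hb1
                · rw [if_neg hl2] at hb1
                  exact hb1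
            have hBi : (q : ℝ) ≤ B i' := by
              have hb := (hbox i').1
              dsimp only at hb
              have hni : ¬ ((i' : ℕ) < i) := by simp [hi']
              have hei : ((i' : ℕ) = i) := by simp [hi']
              rw [if_neg hni, if_pos hei] at hb
              exact le_trans (le_max_left _ _) hb
            have : B i' ≤ bb x := le_csSup (hKcomp x).bddAbove ⟨B, hBK, rfl⟩
            linarith
          · intro hne
            by_contra hcon
            push_neg at hcon
            apply hne
            obtain ⟨B, hBK, hBa⟩ := hb_mem x
            refine ⟨B, fun l => ?_, hBK.2⟩
            have hb := hBK.1 l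
            rw [mem_Icc] at hb ⊢
            obtain ⟨hb1, hb2⟩ := hb
            have hb1' : (if (l : ℕ) < i then v x l else -((J x : ℕ) : ℝ)) ≤ B l := by
              simpa only [hlo₀] using hb1
            refine ⟨?_, hb2⟩
            show (fun l : Fin n => if (l : ℕ) < i then v x l else
              if (l : ℕ) = i then max (q : ℝ) (-((J x : ℕ) : ℝ)) else -((J x : ℕ) : ℝ)) l ≤ B l
            dsimp only
            by_cases hl : (l : ℕ) < i
            · rw [if_pos hl] at hb1' ⊢
              exact hb1'
            · rw [if_neg hl] at hb1' ⊢
              by_cases hl2 : (l : ℕ) = i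
              · have hli : l = i' := Fin.ext (by simp [hi', hl2])
                have hBa' : B i' = bb x := hBa
                rw [if_pos hl2]
                refine max_le ?_ hb1'
                rw [hli, hBa']
                exact hcon
              · rw [if_neg hl2]
                exact hb1'
        rw [heq]
        apply analyticSet_empty_cSet Y hYne f husa _ hJR _ _ _ hhi₀m
        apply measurable_pi_lambda
        intro l
        by_cases hl : (l : ℕ) < i
        · simp only [if_pos hl]
          exact (measurable_pi_apply l).comp hv
        · by_cases hl2 : (l : ℕ) = i
          · simp only [if_neg hl, if_pos hl2]
            exact measurable_const.max hJR.neg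
          · simp only [if_neg hl, if_neg hl2]
            exact hJR.neg
      obtain ⟨w, hw, hwab⟩ := exists_measurable_between a bb hab hUa hVb
      refine ⟨fun x => Function.update (v x) i' (w x), ?_, ?_⟩
      · apply measurable_pi_lambda
        intro l
        simp only [Function.update_apply]
        by_cases hl : l = i'
        · simp only [if_pos hl]
          exact hw
        · simp only [if_neg hl]
          exact (measurable_pi_apply l).comp hv
      · intro x
        -- the value w x is attained on K x at coordinate i'
        have himg_conv : Convex ℝ ((fun B : Fin n → ℝ => B i') '' K x) := by
          have := (convex_cSet (lo := lo₀ x) (hi := hi₀ x)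
            (yy := fun y : Y => (y : Fin n → ℝ))
            (t := fun y : Y => f x (y : Fin n → ℝ) - ((J x : ℕ) : ℝ))).linear_image
            (LinearMap.proj (R := ℝ) (φ := fun _ : Fin n => ℝ) i')
          exact this
        have hIcc : Icc (a x) (bb x) ⊆ (fun B : Fin n → ℝ => B i') '' K x :=
          himg_conv.ordConnected.out (ha_mem x) (hb_mem x)
        obtain ⟨B, hBK, hBi⟩ := hIcc ⟨(hwab x).1, (hwab x).2⟩
        refine ⟨B, fun l => ?_, hBK.2⟩
        have hb := hBK.1 l
        rw [mem_Icc] at hb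
        obtain ⟨hb1, hb2⟩ := hb
        have hb1' : (if (l : ℕ) < i then v x l else -((J x : ℕ) : ℝ)) ≤ B l := by
          simpa only [hlo₀] using hb1
        have hb2' : B l ≤ (if (l : ℕ) < i then v x l else ((J x : ℕ) : ℝ)) := by
          simpa only [hhi₀] using hb2
        rw [mem_Icc]
        dsimp only
        by_cases hl : (l : ℕ) < i + 1
        · rw [if_pos hl, if_pos hl]
          by_cases hl2 : (l : ℕ) < i
          · have hlne : l ≠ i' := by
              intro h
              rw [h] at hl2
              simp only [hi'] at hl2
              omega
            rw [Function.update_of_ne hlne]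
            rw [if_pos hl2] at hb1' hb2'
            exact ⟨hb1', hb2'⟩
          · have hli : l = i' := Fin.ext (by simp only [hi']; omega)
            have hBi' : B i' = w x := hBi
            rw [hli, Function.update_self, hBi']
            exact ⟨le_rfl, le_rfl⟩
        · rw [if_neg hl, if_neg hl]
          have hl2 : ¬ ((l : ℕ) < i) := by omega
          rw [if_neg hl2] at hb1' hb2'
          exact ⟨hb1', hb2'⟩
  -- Step 3 : conclusion
  obtain ⟨v, hv, hvK⟩ := hstage n le_rfl
  refine ⟨v, fun x => ((J x : ℕ) : ℝ), hv, hJR, ?_⟩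
  intro x y hy
  obtain ⟨B, hbox, hdots⟩ := hvK x
  have hBv : B = v x := by
    funext l
    have hb := hbox l
    rw [mem_Icc] at hb
    obtain ⟨hb1, hb2⟩ := hb
    dsimp only at hb1 hb2
    rw [if_pos l.2] at hb1 hb2
    exact le_antisymm hb2 hb1
  have hthis := hdots ⟨y, hy⟩
  dsimp only at hthis
  rw [hBv] at hthis
  have hdot : dot y (v x) = ∑ i, v x i * y i := by
    unfold dot
    exact Finset.sum_congr rfl fun i _ => mul_comm _ _
  rw [hdot] at hthis
  linarith

end Assembly

end HypSel

open MeasureTheory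

/-- Hyperplane selection over an analytic domain Y ⊆ ℝⁿ. -/
theorem hyperplane_selection_analytic {X : Type*} [TopologicalSpace X] [PolishSpace X]
    [MeasurableSpace X] [BorelSpace X]
    {n : ℕ} (Y : Set (Fin n → ℝ)) (hY : AnalyticSet Y)
    (f : X → (Fin n → ℝ) → ℝ)
    (husa : ∀ γ : ℝ, AnalyticSet {p : X × (Fin n → ℝ) | p.2 ∈ Y ∧ γ < f p.1 p.2})
    (b : X → Fin n → ℝ) (c : X → ℝ)
    (hdom : ∀ x, ∀ y ∈ Y, f x y ≤ (∑ i, b x i * y i) + c x) :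
    ∃ (B : X → Fin n → ℝ) (C : X → ℝ), Measurable B ∧ Measurable C ∧
      ∀ x, ∀ y ∈ Y, f x y ≤ (∑ i, B x i * y i) + C x := by
  rcases Set.eq_empty_or_nonempty Y with h0 | hYne
  · exact ⟨fun _ _ => 0, fun _ => 0, measurable_const, measurable_const,
      fun x y hy => absurd hy (by rw [h0]; exact Set.notMem_empty y)⟩
  · exact HypSel.main_selection Y hYne f husa b c hdom
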